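/- Probability that a symmetric random walk stays positive: let {X_j}_{j≥1} be i.i.d. real random variables whose common distribution μ is symmetric (μ(−B) = μ(B) for every Borel set B) and continuous (μ({x}) = 0 for every x ∈ ℝ), and let S_n = X_1 + ... + X_n. Then for every n ≥ 1, P( S_1 > 0, S_2 > 0, ..., S_n > 0 ) = binom(2n, n) / 2^{2n}. -/

import Mathlib

open MeasureTheory ProbabilityTheory Finset

namespace SWSP
noncomputable section

/-- extend a tuple by zero -/
def ext' {m : ℕ} (y : Fin m → ℝ) (i : ℕ) : ℝ := if h : i < m then y ⟨i, h⟩ else 0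

/-- prefix sums -/
def Sp {m : ℕ} (y : Fin m → ℝ) (j : ℕ) : ℝ := ∑ i ∈ range j, ext' y i

def piν (μ : Measure ℝ) (m : ℕ) : Measure (Fin m → ℝ) := Measure.pi fun _ => μ

instance (μ : Measure ℝ) [IsProbabilityMeasure μ] (m : ℕ) : IsProbabilityMeasure (piν μ m) := by
  unfold piν; infer_instance

def stayPos (m : ℕ) : Set (Fin m → ℝ) := {y | ∀ j, 1 ≤ j → j ≤ m → 0 < Sp y j}

lemma measurable_ext' {m : ℕ} (i : ℕ) : Measurable fun y : Fin m → ℝ => ext' y i := by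
  unfold ext'
  split
  · exact measurable_pi_apply _
  · exact measurable_const

lemma measurable_Sp {m : ℕ} (j : ℕ) : Measurable fun y : Fin m → ℝ => Sp y j :=
  Finset.measurable_sum _ fun i _ => measurable_ext' i

lemma measurableSet_stayPos (m : ℕ) : MeasurableSet (stayPos m) := by
  have : stayPos m = ⋂ (j : ℕ) (_ : 1 ≤ j) (_ : j ≤ m), {y : Fin m → ℝ | 0 < Sp y j} := by
    ext y; simp [stayPos, Set.mem_iInter]
  rw [this]
  exact MeasurableSet.iInter fun j => MeasurableSet.iInter fun _ => MeasurableSet.iInter fun _ =>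
    measurableSet_lt measurable_const (measurable_Sp j)

lemma ext'_lt {m : ℕ} (y : Fin m → ℝ) {i : ℕ} (h : i < m) : ext' y i = y ⟨i, h⟩ := dif_pos h

lemma Sp_castAdd {a b : ℕ} (w : Fin (a+b) → ℝ) {j : ℕ} (hj : j ≤ a) :
    Sp (fun i : Fin a => w (Fin.castAdd b i)) j = Sp w j := by
  refine Finset.sum_congr rfl fun i hi => ?_
  rw [Finset.mem_range] at hi
  have h1 : i < a := lt_of_lt_of_le hi hj
  have h2 : i < a + b := lt_of_lt_of_le h1 (Nat.le_add_right a b)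
  rw [ext'_lt _ h1, ext'_lt _ h2]
  congr 1

lemma Sp_natAdd {a b : ℕ} (w : Fin (a+b) → ℝ) {j : ℕ} (hj : j ≤ b) :
    Sp (fun i : Fin b => w (Fin.natAdd a i)) j = Sp w (a + j) - Sp w a := by
  have h0 : Sp w (a+j) = Sp w a + ∑ i ∈ Finset.Ico a (a+j), ext' w i := by
    unfold Sp
    simp only [Finset.range_eq_Ico]
    exact (Finset.sum_Ico_consecutive _ (Nat.zero_le a) (Nat.le_add_right a j)).symm
  rw [h0]
  ring_nf
  rw [Finset.sum_Ico_eq_sum_range]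
  simp only [Nat.add_sub_cancel_left]
  refine Finset.sum_congr rfl fun i hi => ?_
  rw [Finset.mem_range] at hi
  have h1 : i < b := lt_of_lt_of_le hi hj
  have h2 : a + i < a + b := Nat.add_lt_add_left h1 a
  rw [ext'_lt _ h1, ext'_lt _ h2]
  congr 1

lemma Sp_neg {m : ℕ} (y : Fin m → ℝ) (j : ℕ) : Sp (fun i => -(y i)) j = - Sp y j := by
  unfold Sp
  rw [← Finset.sum_neg_distrib]
  refine Finset.sum_congr rfl fun i _ => ?_
  unfold ext'
  split <;> simp

lemma Sp_cast {m m' : ℕ} (h : m = m') (y : Fin m → ℝ) (j : ℕ) :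
    Sp (fun i : Fin m' => y (Fin.cast h.symm i)) j = Sp y j := by
  refine Finset.sum_congr rfl fun i hi => ?_
  unfold ext'
  subst h
  rfl

-- reversal: Sp of reversed tuple
lemma Sp_rev {m : ℕ} (y : Fin m → ℝ) {j : ℕ} (hj : j ≤ m) :
    Sp (fun i : Fin m => y i.rev) j = Sp y m - Sp y (m - j) := by
  induction j with
  | zero => simp [Sp]
  | succ j ih =>
    have hj' : j ≤ m := Nat.le_of_succ_le hj
    unfold Sp at *
    rw [Finset.sum_range_succ, ih hj']
    have hjm : j < m := hj
    have h1 : ext' (fun i : Fin m => y i.rev) j = y (Fin.rev ⟨j, hjm⟩) := ext'_lt _ hjm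
    have hco : (Fin.rev ⟨j, hjm⟩ : ℕ) = m - 1 - j := by
      simp [Fin.rev]
      omega
    have h2 : y (Fin.rev ⟨j, hjm⟩) = ext' y (m - 1 - j) := by
      have hrev : Fin.rev ⟨j, hjm⟩ = ⟨m - 1 - j, by omega⟩ := Fin.ext hco
      rw [ext'_lt _ (by omega : m - 1 - j < m)]
      exact congrArg y hrev
    -- Sp y (m - j) = Sp y (m - (j+1)) + ext' y (m-1-j)
    have h3 : ∑ i ∈ range (m - j), ext' y i
        = ∑ i ∈ range (m - (j+1)), ext' y i + ext' y (m - 1 - j) := by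
      have h4 : m - j = (m - (j+1)) + 1 := by omega
      have h5 : m - (j+1) = m - 1 - j := by omega
      rw [h4, Finset.sum_range_succ, h5]
    rw [h1, h2]
    linarith [h3]

lemma neg_preserving (μ : Measure ℝ) [IsProbabilityMeasure μ]
    (hsym : ∀ B : Set ℝ, MeasurableSet B → μ ((fun x => -x) ⁻¹' B) = μ B) (m : ℕ) :
    MeasurePreserving (fun y : Fin m → ℝ => fun i => -(y i)) (piν μ m) (piν μ m) := by
  have h1 : MeasurePreserving (fun x : ℝ => -x) μ μ := by
    refine ⟨measurable_neg, ?_⟩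
    ext B hB
    rw [Measure.map_apply measurable_neg hB]
    exact hsym B hB
  exact measurePreserving_pi _ _ (fun _ : Fin m => h1)

lemma map_eq_piν {Ω : Type*} [MeasurableSpace Ω] (P : Measure Ω) [IsProbabilityMeasure P]
    (μ : Measure ℝ) [IsProbabilityMeasure μ] (X : ℕ → Ω → ℝ)
    (hmeas : ∀ j, Measurable (X j))
    (hdist : ∀ j, Measure.map (X j) P = μ)
    (hind : iIndepFun X P) (n : ℕ) :
    Measure.map (fun ω (i : Fin n) => X i ω) P = piν μ n := by
  have hf : Measurable (fun ω (i : Fin n) => X i ω) :=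
    measurable_pi_iff.mpr fun i => hmeas i
  unfold piν
  symm
  refine Measure.pi_eq fun s hs => ?_
  rw [Measure.map_apply hf (MeasurableSet.univ_pi hs)]
  classical
  set S : ℕ → Set ℝ := fun k => if h : k < n then s ⟨k, h⟩ else Set.univ with hS
  have hSmeas : ∀ k, MeasurableSet (S k) := by
    intro k; rw [hS]; dsimp only; split
    · exact hs _
    · exact MeasurableSet.univ
  have hpre : (fun ω (i : Fin n) => X i ω) ⁻¹' (Set.univ.pi s) =
      ⋂ k ∈ Finset.range n, X k ⁻¹' S k := by
    ext ω
    simp only [Set.mem_preimage, Set.mem_pi, Set.mem_univ, forall_true_left, Set.mem_iInter,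
      Finset.mem_range, hS]
    constructor
    · intro h k hk
      simp only [hk, dif_pos]
      exact h ⟨k, hk⟩
    · intro h i
      have := h i.1 i.2
      simpa [i.2] using this
  rw [hpre, hind.measure_inter_preimage_eq_mul (Finset.range n) (fun k _ => hSmeas k)]
  have : ∀ k ∈ Finset.range n, P (X k ⁻¹' S k) = μ (S k) := by
    intro k _
    rw [← hdist k, Measure.map_apply (hmeas k) (hSmeas k)]
  rw [Finset.prod_congr rfl this]
  have h2 : ∀ i : Fin n, μ (s i) = μ (S i.val) := by
    intro i
    have : S i.val = s i := by simp [hS, i.2]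
    rw [this]
  calc ∏ x ∈ Finset.range n, μ (S x) = ∏ i : Fin n, μ (S i.val) :=
        (Fin.prod_univ_eq_prod_range (fun k => μ (S k)) n).symm
    _ = ∏ i : Fin n, μ (s i) := Finset.prod_congr rfl fun i _ => (h2 i).symm

lemma sum_coords_null (μ : Measure ℝ) [IsProbabilityMeasure μ]
    (hcont : ∀ x : ℝ, μ {x} = 0) {m : ℕ} (T : Finset (Fin m)) (hT : T.Nonempty) (c : ℝ) :
    piν μ m {y | ∑ i ∈ T, y i = c} = 0 := by
  classical
  match m with
  | 0 => exact absurd hT (by simp [Finset.eq_empty_of_isEmpty])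
  | Nat.succ m =>
  obtain ⟨i₀, hi₀⟩ := hT
  set e := MeasurableEquiv.piFinSuccAbove (fun _ : Fin (m+1) => ℝ) i₀ with he
  have mp := measurePreserving_piFinSuccAbove (fun _ : Fin (m+1) => μ) i₀
  have hSmeas : MeasurableSet {y : Fin (m+1) → ℝ | ∑ i ∈ T, y i = c} :=
    measurableSet_eq_fun (Finset.measurable_sum _ fun i _ => measurable_pi_apply i)
      measurable_const
  have h1 : piν μ (m+1) {y | ∑ i ∈ T, y i = c}
      = (μ.prod (Measure.pi fun _ : Fin m => μ)) (e.symm ⁻¹' {y | ∑ i ∈ T, y i = c}) :=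
    ((mp.symm e).measure_preimage hSmeas.nullMeasurableSet).symm
  set T' : Finset (Fin m) := Finset.univ.filter (fun j => i₀.succAbove j ∈ T) with hT'
  have himg : T.erase i₀ = T'.image i₀.succAbove := by
    ext i
    simp only [Finset.mem_erase, Finset.mem_image, hT', Finset.mem_filter, Finset.mem_univ,
      true_and]
    constructor
    · rintro ⟨hne, hiT⟩
      obtain ⟨j, hj⟩ := Fin.exists_succAbove_eq hne
      exact ⟨j, hj ▸ hiT, hj⟩
    · rintro ⟨j, hjT, rfl⟩
      exact ⟨Fin.succAbove_ne i₀ j, hjT⟩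
  have hpre : e.symm ⁻¹' {y | ∑ i ∈ T, y i = c}
      = {p : ℝ × (Fin m → ℝ) | p.1 + ∑ j ∈ T', p.2 j = c} := by
    ext ⟨a, z⟩
    have hE : e.symm (a, z) = i₀.insertNth a z := rfl
    simp only [Set.mem_preimage, Set.mem_setOf_eq, hE]
    have : ∑ i ∈ T, i₀.insertNth a z i = a + ∑ j ∈ T', z j := by
      rw [← Finset.add_sum_erase _ _ hi₀, Fin.insertNth_apply_same, himg,
        Finset.sum_image (fun x _ y _ h => Fin.succAbove_right_injective h)]
      simp [Fin.insertNth_apply_succAbove]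
    rw [this]
  rw [h1, hpre]
  have hmeas2 : MeasurableSet {p : ℝ × (Fin m → ℝ) | p.1 + ∑ j ∈ T', p.2 j = c} :=
    measurableSet_eq_fun
      (measurable_fst.add ((Finset.measurable_sum _ fun i _ =>
        (measurable_pi_apply i).comp measurable_snd)))
      measurable_const
  rw [Measure.prod_apply_symm hmeas2]
  have hslice : ∀ z : Fin m → ℝ,
      μ ((fun a => (a, z)) ⁻¹' {p : ℝ × (Fin m → ℝ) | p.1 + ∑ j ∈ T', p.2 j = c}) = 0 := by
    intro z
    have : ((fun a => (a, z)) ⁻¹' {p : ℝ × (Fin m → ℝ) | p.1 + ∑ j ∈ T', p.2 j = c})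
        = {c - ∑ j ∈ T', z j} := by
      ext a
      simp only [Set.mem_preimage, Set.mem_setOf_eq, Set.mem_singleton_iff]
      constructor <;> intro h <;> linarith
    rw [this]
    exact hcont _
  simp only [hslice]
  simp

lemma split (μ : Measure ℝ) [IsProbabilityMeasure μ] {a b : ℕ}
    {A : Set (Fin a → ℝ)} {B : Set (Fin b → ℝ)} (hA : MeasurableSet A) (hB : MeasurableSet B) :
    piν μ (a + b) {w | (fun i => w (Fin.castAdd b i)) ∈ A ∧ (fun i => w (Fin.natAdd a i)) ∈ B}
      = piν μ a A * piν μ b B := by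
  classical
  set e1 := MeasurableEquiv.piCongrLeft (fun _ : Fin (a+b) => ℝ) finSumFinEquiv with he1
  set e2 := MeasurableEquiv.sumPiEquivProdPi (fun _ : Fin a ⊕ Fin b => ℝ) with he2
  have mp1 := measurePreserving_piCongrLeft (fun _ : Fin (a+b) => μ) finSumFinEquiv
  have mp2 := measurePreserving_sumPiEquivProdPi (fun _ : Fin a ⊕ Fin b => μ)
  set S := {w : Fin (a+b) → ℝ |
    (fun i => w (Fin.castAdd b i)) ∈ A ∧ (fun i => w (Fin.natAdd a i)) ∈ B} with hSdef
  have hmc : Measurable fun (w : Fin (a+b) → ℝ) (i : Fin a) => w (Fin.castAdd b i) :=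
    measurable_pi_iff.mpr fun i => measurable_pi_apply _
  have hmn : Measurable fun (w : Fin (a+b) → ℝ) (i : Fin b) => w (Fin.natAdd a i) :=
    measurable_pi_iff.mpr fun i => measurable_pi_apply _
  have hS : MeasurableSet S := (hmc hA).inter (hmn hB)
  have h1 : piν μ (a+b) S = (Measure.pi fun _ : Fin a ⊕ Fin b => μ) (e1 ⁻¹' S) :=
    (mp1.measure_preimage hS.nullMeasurableSet).symm
  have h2 : (Measure.pi fun _ : Fin a ⊕ Fin b => μ) (e1 ⁻¹' S)
      = ((Measure.pi fun _ : Fin a => μ).prod (Measure.pi fun _ : Fin b => μ))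
          (e2.symm ⁻¹' (e1 ⁻¹' S)) := by
    refine ((mp2.symm e2).measure_preimage ?_).symm
    exact (e1.measurable hS).nullMeasurableSet
  have h3 : e2.symm ⁻¹' (e1 ⁻¹' S) = A ×ˢ B := by
    ext ⟨u, v⟩
    have hval : ∀ i : Fin (a+b), (e1 (e2.symm (u, v))) i = Sum.elim u v (finSumFinEquiv.symm i) := by
      intro i
      have h4 : e2.symm (u, v) = Sum.elim u v := by ext j; cases j <;> rfl
      rw [h4]
      obtain ⟨j, rfl⟩ : ∃ j, finSumFinEquiv j = i := ⟨finSumFinEquiv.symm i, by simp⟩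
      rw [Equiv.symm_apply_apply]
      exact Equiv.piCongrLeft_apply_apply (fun _ => ℝ) finSumFinEquiv (Sum.elim u v) j
    simp only [Set.mem_preimage, hSdef, Set.mem_setOf_eq, Set.mem_prod]
    constructor
    · rintro ⟨h5, h6⟩
      constructor
      · convert h5 using 1
        ext i
        rw [hval (Fin.castAdd b i), finSumFinEquiv_symm_apply_castAdd]
        rfl
      · convert h6 using 1
        ext i
        rw [hval (Fin.natAdd a i), finSumFinEquiv_symm_apply_natAdd]
        rfl
    · rintro ⟨h5, h6⟩
      constructor
      · convert h5 using 1
        ext i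
        rw [hval (Fin.castAdd b i), finSumFinEquiv_symm_apply_castAdd]
        rfl
      · convert h6 using 1
        ext i
        rw [hval (Fin.natAdd a i), finSumFinEquiv_symm_apply_natAdd]
        rfl
  rw [h1, h2, h3, Measure.prod_prod]
  rfl

lemma piCongrLeft_apply_const {ι ι' : Type*} (f : ι ≃ ι') (y : ι → ℝ) (i : ι') :
    (Equiv.piCongrLeft (fun _ => ℝ) f) y i = y (f.symm i) := by
  simp [Equiv.piCongrLeft]

lemma rev_meas (μ : Measure ℝ) [IsProbabilityMeasure μ] (m : ℕ) :
    piν μ m {y | ∀ j < m, Sp y j < Sp y m} = piν μ m (stayPos m) := by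
  have mp := measurePreserving_piCongrLeft (fun _ : Fin m => μ) (Fin.revPerm : Equiv.Perm (Fin m))
  have h1 : (MeasurableEquiv.piCongrLeft (fun _ : Fin m => ℝ) Fin.revPerm) ⁻¹' stayPos m
      = {y | ∀ j < m, Sp y j < Sp y m} := by
    ext y
    have he : ∀ i, (MeasurableEquiv.piCongrLeft (fun _ : Fin m => ℝ) Fin.revPerm) y i
        = y i.rev := by
      intro i
      simp [MeasurableEquiv.piCongrLeft, Equiv.piCongrLeft]
    have hey : ((MeasurableEquiv.piCongrLeft (fun _ : Fin m => ℝ) Fin.revPerm) y)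
        = fun i => y i.rev := funext he
    simp only [Set.mem_preimage, stayPos, Set.mem_setOf_eq, hey]
    constructor
    · intro h j hj
      have h2 := h (m - j) (by omega) (by omega)
      rw [Sp_rev y (by omega)] at h2
      have h3 : m - (m - j) = j := by omega
      rw [h3] at h2
      linarith
    · intro h j hj1 hj2
      rw [Sp_rev y hj2]
      have h2 := h (m - j) (by omega)
      linarith
  rw [← h1]
  exact mp.measure_preimage (measurableSet_stayPos m).nullMeasurableSet

lemma neg_meas (μ : Measure ℝ) [IsProbabilityMeasure μ]
    (hsym : ∀ B : Set ℝ, MeasurableSet B → μ ((fun x => -x) ⁻¹' B) = μ B) (m : ℕ) :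
    piν μ m {y | ∀ j, 1 ≤ j → j ≤ m → Sp y j < 0} = piν μ m (stayPos m) := by
  have mp := neg_preserving μ hsym m
  have h1 : (fun y : Fin m → ℝ => fun i => -(y i)) ⁻¹' stayPos m
      = {y | ∀ j, 1 ≤ j → j ≤ m → Sp y j < 0} := by
    ext y
    simp only [Set.mem_preimage, stayPos, Set.mem_setOf_eq]
    constructor
    · intro h j h1 h2
      have := h j h1 h2
      rw [Sp_neg] at this
      linarith
    · intro h j h1 h2
      rw [Sp_neg]
      have := h j h1 h2
      linarith
  rw [← h1]
  exact mp.measure_preimage (measurableSet_stayPos m).nullMeasurableSet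

def M (n k : ℕ) : Set (Fin n → ℝ) := {y | ∀ j, j ≤ n → j ≠ k → Sp y j < Sp y k}

lemma measurableSet_M (n k : ℕ) : MeasurableSet (M n k) := by
  have : M n k = ⋂ (j : ℕ) (_ : j ≤ n) (_ : j ≠ k), {y : Fin n → ℝ | Sp y j < Sp y k} := by
    ext y; simp [M]
  rw [this]
  exact MeasurableSet.iInter fun j => MeasurableSet.iInter fun _ => MeasurableSet.iInter fun _ =>
    measurableSet_lt (measurable_Sp j) (measurable_Sp k)

lemma sp_diff_eq (n : ℕ) (j k : ℕ) (hjk : j < k) (hk : k ≤ n) (y : Fin n → ℝ) :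
    Sp y k - Sp y j = ∑ i ∈ (Finset.Ico j k).attachFin
      (fun i hi => lt_of_lt_of_le (Finset.mem_Ico.mp hi).2 hk), y i := by
  have h1 : Sp y k = Sp y j + ∑ i ∈ Finset.Ico j k, ext' y i := by
    unfold Sp
    simp only [Finset.range_eq_Ico]
    exact (Finset.sum_Ico_consecutive _ (Nat.zero_le j) (le_of_lt hjk)).symm
  rw [h1]
  ring_nf
  refine Finset.sum_bij
    (fun a ha => (⟨a, lt_of_lt_of_le (Finset.mem_Ico.mp ha).2 hk⟩ : Fin n)) ?_ ?_ ?_ ?_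
  · intro a ha
    rw [Finset.mem_attachFin]
    exact ha
  · intro a ha b hb h
    simpa using congrArg Fin.val h
  · intro b hb
    rw [Finset.mem_attachFin] at hb
    exact ⟨b.1, hb, Fin.ext rfl⟩
  · intro a ha
    exact ext'_lt y _

lemma bad_null (μ : Measure ℝ) [IsProbabilityMeasure μ] (hcont : ∀ x : ℝ, μ {x} = 0)
    (n j k : ℕ) (hjk : j < k) (hk : k ≤ n) :
    piν μ n {y | Sp y j = Sp y k} = 0 := by
  have hT : ((Finset.Ico j k).attachFin
      (fun i hi => lt_of_lt_of_le (Finset.mem_Ico.mp hi).2 hk)).Nonempty := by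
    rw [← Finset.card_pos, Finset.card_attachFin, Nat.card_Ico]
    omega
  have h1 : {y : Fin n → ℝ | Sp y j = Sp y k}
      = {y | ∑ i ∈ (Finset.Ico j k).attachFin
          (fun i hi => lt_of_lt_of_le (Finset.mem_Ico.mp hi).2 hk), y i = 0} := by
    ext y
    simp only [Set.mem_setOf_eq]
    rw [← sp_diff_eq n j k hjk hk y]
    constructor <;> intro h <;> linarith
  rw [h1]
  exact sum_coords_null μ hcont _ hT 0

lemma M_meas_eq (μ : Measure ℝ) [IsProbabilityMeasure μ]
    (hsym : ∀ B : Set ℝ, MeasurableSet B → μ ((fun x => -x) ⁻¹' B) = μ B)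
    {n k : ℕ} (hk : k ≤ n) :
    piν μ n (M n k) = piν μ k (stayPos k) * piν μ (n - k) (stayPos (n - k)) := by
  obtain ⟨b, rfl⟩ : ∃ b, n = k + b := ⟨n - k, by omega⟩
  have hb : k + b - k = b := by omega
  rw [hb]
  set A : Set (Fin k → ℝ) := {u | ∀ j < k, Sp u j < Sp u k} with hA
  set B : Set (Fin b → ℝ) := {v | ∀ j, 1 ≤ j → j ≤ b → Sp v j < 0} with hB
  have hAm : MeasurableSet A := by
    have : A = ⋂ (j : ℕ) (_ : j < k), {u : Fin k → ℝ | Sp u j < Sp u k} := by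
      ext u; simp [hA]
    rw [this]
    exact MeasurableSet.iInter fun j => MeasurableSet.iInter fun _ =>
      measurableSet_lt (measurable_Sp j) (measurable_Sp k)
  have hBm : MeasurableSet B := by
    have : B = ⋂ (j : ℕ) (_ : 1 ≤ j) (_ : j ≤ b), {v : Fin b → ℝ | Sp v j < 0} := by
      ext v; simp [hB]
    rw [this]
    exact MeasurableSet.iInter fun j => MeasurableSet.iInter fun _ => MeasurableSet.iInter fun _ =>
      measurableSet_lt (measurable_Sp j) measurable_const
  have hM : M (k + b) k = {w | (fun i => w (Fin.castAdd b i)) ∈ A ∧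
      (fun i => w (Fin.natAdd k i)) ∈ B} := by
    ext w
    simp only [M, Set.mem_setOf_eq, hA, hB]
    constructor
    · intro h
      constructor
      · intro j hj
        rw [Sp_castAdd w (le_of_lt hj), Sp_castAdd w (le_refl k)]
        exact h j (by omega) (by omega)
      · intro j hj1 hj2
        rw [Sp_natAdd w hj2]
        have := h (k + j) (by omega) (by omega)
        linarith
    · rintro ⟨h1, h2⟩ j hj hne
      rcases lt_or_gt_of_ne hne with hlt | hgt
      · have := h1 j hlt
        rwa [Sp_castAdd w (le_of_lt hlt), Sp_castAdd w (le_refl k)] at this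
      · have hj2 : j - k ≤ b := by omega
        have hj1 : 1 ≤ j - k := by omega
        have := h2 (j - k) hj1 hj2
        rw [Sp_natAdd w hj2] at this
        have hjj : k + (j - k) = j := by omega
        rw [hjj] at this
        linarith
  rw [hM, split μ hAm hBm, rev_meas μ k, neg_meas μ hsym b]

lemma decomposition (μ : Measure ℝ) [IsProbabilityMeasure μ]
    (hsym : ∀ B : Set ℝ, MeasurableSet B → μ ((fun x => -x) ⁻¹' B) = μ B)
    (hcont : ∀ x : ℝ, μ {x} = 0) (n : ℕ) :
    ∑ k ∈ Finset.range (n + 1),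
      piν μ k (stayPos k) * piν μ (n - k) (stayPos (n - k)) = 1 := by
  classical
  have hsum : ∑ k ∈ Finset.range (n + 1), piν μ n (M n k)
      = piν μ n (⋃ k ∈ Finset.range (n + 1), M n k) := by
    refine (measure_biUnion_finset ?_ fun k _ => measurableSet_M n k).symm
    intro k hk k' hk' hne
    simp only [Finset.coe_range, Set.mem_Iio] at hk hk'
    show Disjoint (M n k) (M n k')
    rw [Set.disjoint_left]
    intro y hy hy'
    have h1 := hy k' (by omega) (Ne.symm hne)
    have h2 := hy' k (by omega) hne
    linarith
  have hbad : piν μ n (⋃ (j : ℕ) (k : ℕ) (_ : j < k ∧ k ≤ n), {y : Fin n → ℝ | Sp y j = Sp y k})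
      = 0 := by
    refine measure_iUnion_null fun j => measure_iUnion_null fun k => measure_iUnion_null fun h => ?_
    exact bad_null μ hcont n j k h.1 h.2
  have hcover : Set.univ ⊆ (⋃ k ∈ Finset.range (n + 1), M n k) ∪
      (⋃ (j : ℕ) (k : ℕ) (_ : j < k ∧ k ≤ n), {y : Fin n → ℝ | Sp y j = Sp y k}) := by
    intro y _
    by_cases hbadmem : y ∈ ⋃ (j : ℕ) (k : ℕ) (_ : j < k ∧ k ≤ n),
        {y : Fin n → ℝ | Sp y j = Sp y k}
    · exact Or.inr hbadmem
    · left
      simp only [Set.mem_iUnion, Set.mem_setOf_eq, not_exists] at hbadmem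
      obtain ⟨kk, hkk, hmax⟩ := Finset.exists_max_image (Finset.range (n+1)) (Sp y)
        ⟨0, by simp⟩
      simp only [Set.mem_iUnion, Finset.mem_range]
      refine ⟨kk, by rwa [Finset.mem_range] at hkk, fun j hj hne => ?_⟩
      have hle := hmax j (Finset.mem_range.mpr (by omega))
      rcases lt_or_eq_of_le hle with h | h
      · exact h
      · exfalso
        rcases lt_or_gt_of_ne hne with hlt | hgt
        · exact hbadmem j kk ⟨hlt, by rwa [Finset.mem_range, Nat.lt_succ_iff] at hkk⟩ h
        · exact hbadmem kk j ⟨hgt, by omega⟩ h.symm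
  have huniv : piν μ n (⋃ k ∈ Finset.range (n + 1), M n k) = 1 := by
    refine le_antisymm prob_le_one ?_
    have h3 := measure_mono (μ := piν μ n) hcover
    have h4 := measure_union_le (μ := piν μ n) (⋃ k ∈ Finset.range (n + 1), M n k)
      (⋃ (j : ℕ) (k : ℕ) (_ : j < k ∧ k ≤ n), {y : Fin n → ℝ | Sp y j = Sp y k})
    rw [measure_univ] at h3
    rw [hbad, add_zero] at h4
    exact le_trans h3 h4
  calc ∑ k ∈ Finset.range (n + 1),
      piν μ k (stayPos k) * piν μ (n - k) (stayPos (n - k))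
      = ∑ k ∈ Finset.range (n + 1), piν μ n (M n k) := by
        refine Finset.sum_congr rfl fun k hk => ?_
        rw [Finset.mem_range, Nat.lt_succ_iff] at hk
        exact (M_meas_eq μ hsym hk).symm
    _ = 1 := by rw [hsum, huniv]

def u (n : ℕ) : ℝ := (Nat.centralBinom n : ℝ) / 4 ^ n

lemma u_zero : u 0 = 1 := by simp [u, Nat.centralBinom]

lemma u_rec (j : ℕ) : ((j:ℝ) + 1) * u (j+1) = ((j:ℝ) + 1/2) * u j := by
  have h := Nat.succ_mul_centralBinom_succ j
  have h' : ((j:ℝ) + 1) * (Nat.centralBinom (j+1) : ℝ)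
      = 2 * (2*(j:ℝ) + 1) * (Nat.centralBinom j : ℝ) := by
    exact_mod_cast congrArg (Nat.cast : ℕ → ℝ) h
  unfold u
  rw [pow_succ]
  have h4 : (4:ℝ) ^ j ≠ 0 := by positivity
  field_simp
  linear_combination 2 * h'

lemma A_eq_one : ∀ n : ℕ, ∑ k ∈ Finset.range (n+1), u k * u (n - k) = 1 := by
  intro n
  induction n with
  | zero => simpa using by rw [u_zero]; norm_num
  | succ n ih =>
    -- S0 and S1
    set A1 := ∑ k ∈ Finset.range (n+2), u k * u (n+1-k) with hA1
    set S1 := ∑ k ∈ Finset.range (n+2), (k:ℝ) * (u k * u (n+1-k)) with hS1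
    set S0 := ∑ k ∈ Finset.range (n+1), (k:ℝ) * (u k * u (n-k)) with hS0
    have hrefl1 : 2 * S1 = ((n:ℝ)+1) * A1 := by
      have h1 : S1 = ∑ k ∈ Finset.range (n+2), ((n+1-k : ℕ):ℝ) * (u (n+1-k) * u k) := by
        rw [hS1]
        rw [← Finset.sum_range_reflect (fun k => (k:ℝ) * (u k * u (n+1-k))) (n+2)]
        refine Finset.sum_congr rfl fun k hk => ?_
        rw [Finset.mem_range] at hk
        have e1 : n + 2 - 1 - k = n + 1 - k := by omega
        have e2 : n + 1 - (n + 1 - k) = k := by omega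
        rw [e1, e2]
      have h2 : 2 * S1 = S1 + S1 := by ring
      rw [h2]
      nth_rewrite 2 [h1]
      rw [hS1, ← Finset.sum_add_distrib]
      rw [hA1, Finset.mul_sum]
      refine Finset.sum_congr rfl fun k hk => ?_
      rw [Finset.mem_range] at hk
      have e3 : ((n+1-k : ℕ):ℝ) = (n:ℝ) + 1 - (k:ℝ) := by
        have : (k:ℝ) ≤ (n:ℝ) + 1 := by exact_mod_cast Nat.lt_succ_iff.mp (by omega)
        push_cast [Nat.cast_sub (by omega : k ≤ n + 1)]
        ring
      rw [e3]
      ring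
    have hrefl0 : 2 * S0 = (n:ℝ) * (∑ k ∈ Finset.range (n+1), u k * u (n-k)) := by
      have h1 : S0 = ∑ k ∈ Finset.range (n+1), ((n-k : ℕ):ℝ) * (u (n-k) * u k) := by
        rw [hS0]
        rw [← Finset.sum_range_reflect (fun k => (k:ℝ) * (u k * u (n-k))) (n+1)]
        refine Finset.sum_congr rfl fun k hk => ?_
        rw [Finset.mem_range] at hk
        have e1 : n + 1 - 1 - k = n - k := by omega
        have e2 : n - (n - k) = k := by omega
        rw [e1, e2]
      have h2 : 2 * S0 = S0 + S0 := by ring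
      rw [h2]
      nth_rewrite 2 [h1]
      rw [hS0, ← Finset.sum_add_distrib, Finset.mul_sum]
      refine Finset.sum_congr rfl fun k hk => ?_
      rw [Finset.mem_range] at hk
      have e3 : ((n-k : ℕ):ℝ) = (n:ℝ) - (k:ℝ) := by
        push_cast [Nat.cast_sub (by omega : k ≤ n)]
        ring
      rw [e3]
      ring
    have hshift : S1 = S0 + (1/2) * (∑ k ∈ Finset.range (n+1), u k * u (n-k)) := by
      rw [hS1, Finset.sum_range_succ' (fun k => (k:ℝ) * (u k * u (n+1-k))) (n+1)]
      simp only [Nat.cast_zero, zero_mul, add_zero, Nat.cast_add, Nat.cast_one]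
      have h5 : ∀ j ∈ Finset.range (n+1), ((j:ℝ)+1) * (u (j+1) * u (n+1-(j+1)))
          = (j:ℝ) * (u j * u (n-j)) + (1/2) * (u j * u (n-j)) := by
        intro j hj
        have e1 : n + 1 - (j+1) = n - j := by omega
        rw [e1]
        have := u_rec j
        calc ((j:ℝ)+1) * (u (j+1) * u (n-j)) = (((j:ℝ)+1) * u (j+1)) * u (n-j) := by ring
          _ = (((j:ℝ) + 1/2) * u j) * u (n-j) := by rw [this]
          _ = (j:ℝ) * (u j * u (n-j)) + (1/2) * (u j * u (n-j)) := by ring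
      rw [Finset.sum_congr rfl h5, Finset.sum_add_distrib, hS0, ← Finset.mul_sum]
    -- combine
    have hfin : ((n:ℝ)+1) * A1 = ((n:ℝ)+1) * 1 := by
      rw [← hrefl1, hshift]
      rw [ih] at *
      rw [mul_add, hrefl0, ih]
      ring
    have hne : ((n:ℝ)+1) ≠ 0 := by positivity
    have h6 := mul_left_cancel₀ hne hfin
    exact h6

lemma r_eq_u (r : ℕ → ℝ) (h0 : r 0 = 1)
    (hrec : ∀ n, ∑ k ∈ Finset.range (n+1), r k * r (n-k) = 1) : ∀ n, r n = u n := by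
  intro n
  induction n using Nat.strong_induction_on with
  | _ n ih =>
    match n with
    | 0 => rw [h0, u_zero]
    | Nat.succ m =>
      have hr := hrec (m+1)
      have hA := A_eq_one (m+1)
      rw [Finset.sum_range_succ] at hr hA
      rw [Finset.sum_range_succ' (fun k => r k * r (m+1-k)) m] at hr
      rw [Finset.sum_range_succ' (fun k => u k * u (m+1-k)) m] at hA
      simp only [Nat.sub_zero, Nat.sub_self] at hr hA
      have hmid : ∑ k ∈ Finset.range m, r (k+1) * r (m+1-(k+1))
          = ∑ k ∈ Finset.range m, u (k+1) * u (m+1-(k+1)) := by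
        refine Finset.sum_congr rfl fun k hk => ?_
        rw [Finset.mem_range] at hk
        rw [ih (k+1) (by omega), ih (m+1-(k+1)) (by omega)]
      rw [h0] at hr
      rw [u_zero] at hA
      rw [hmid] at hr
      linarith

theorem main {Ω : Type*} [MeasurableSpace Ω] (P : Measure Ω)
    [IsProbabilityMeasure P] (μ : Measure ℝ) [IsProbabilityMeasure μ]
    (hsym : ∀ B : Set ℝ, MeasurableSet B → μ ((fun x => -x) ⁻¹' B) = μ B)
    (hcont : ∀ x : ℝ, μ {x} = 0)
    (X : ℕ → Ω → ℝ)
    (hmeas : ∀ j, Measurable (X j))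
    (hdist : ∀ j, Measure.map (X j) P = μ)
    (hind : iIndepFun X P)
    (n : ℕ) (hn : 1 ≤ n) :
    (P {ω | ∀ j, 1 ≤ j → j ≤ n → 0 < ∑ i ∈ Finset.range j, X i ω}).toReal =
      ((2 * n).choose n : ℝ) / 2 ^ (2 * n) := by
  classical
  set r : ℕ → ℝ := fun m => (piν μ m (stayPos m)).toReal with hr
  have hfin : ∀ m, piν μ m (stayPos m) ≠ ⊤ := fun m => measure_ne_top _ _
  have h0 : r 0 = 1 := by
    have : stayPos 0 = Set.univ := by
      ext y
      simp only [stayPos, Set.mem_setOf_eq, Set.mem_univ, iff_true]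
      intro j h1 h2
      omega
    rw [hr]
    simp only [this, measure_univ]
    simp
  have hrec : ∀ m, ∑ k ∈ Finset.range (m+1), r k * r (m-k) = 1 := by
    intro m
    have hd := decomposition μ hsym hcont m
    have h1 := congrArg ENNReal.toReal hd
    rw [ENNReal.toReal_sum (fun k _ => ENNReal.mul_ne_top (hfin k) (hfin (m-k)))] at h1
    simp only [ENNReal.toReal_mul, ENNReal.toReal_one] at h1
    exact h1
  have hru := r_eq_u r h0 hrec n
  -- identify the probability with r n
  have hmap := map_eq_piν P μ X hmeas hdist hind n
  have hfmeas : Measurable (fun ω (i : Fin n) => X i ω) := measurable_pi_iff.mpr fun i => hmeas i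
  have hpre : (fun ω (i : Fin n) => X i ω) ⁻¹' stayPos n
      = {ω | ∀ j, 1 ≤ j → j ≤ n → 0 < ∑ i ∈ Finset.range j, X i ω} := by
    ext ω
    simp only [Set.mem_preimage, stayPos, Set.mem_setOf_eq]
    have hsp : ∀ j, j ≤ n → Sp (fun i : Fin n => X i ω) j = ∑ i ∈ Finset.range j, X i ω := by
      intro j hj
      refine Finset.sum_congr rfl fun i hi => ?_
      rw [Finset.mem_range] at hi
      exact ext'_lt _ (by omega)
    constructor
    · intro h j h1 h2
      rw [← hsp j h2]
      exact h j h1 h2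
    · intro h j h1 h2
      rw [hsp j h2]
      exact h j h1 h2
  have hP : P {ω | ∀ j, 1 ≤ j → j ≤ n → 0 < ∑ i ∈ Finset.range j, X i ω}
      = piν μ n (stayPos n) := by
    rw [← hpre, ← Measure.map_apply hfmeas (measurableSet_stayPos n), hmap]
  rw [hP]
  rw [show (piν μ n (stayPos n)).toReal = r n from rfl, hru]
  unfold u
  rw [Nat.centralBinom]
  congr 1
  rw [pow_mul]
  norm_num
end
end SWSP

open MeasureTheory ProbabilityTheory

/-- Probability that a symmetric random walk stays positive: for i.i.d. steps with
symmetric continuous common distribution `μ` and partial sums `Sⱼ = X₀ + ⋯ + X_{j-1}`,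
one has `P(S₁ > 0, …, Sₙ > 0) = C(2n,n) / 2^{2n}`. -/
theorem symmetric_walk_stays_positive {Ω : Type*} [MeasurableSpace Ω] (P : Measure Ω)
    [IsProbabilityMeasure P] (μ : Measure ℝ) [IsProbabilityMeasure μ]
    (hsym : ∀ B : Set ℝ, MeasurableSet B → μ ((fun x => -x) ⁻¹' B) = μ B)
    (hcont : ∀ x : ℝ, μ {x} = 0)
    (X : ℕ → Ω → ℝ)
    (hmeas : ∀ j, Measurable (X j))
    (hdist : ∀ j, Measure.map (X j) P = μ)
    (hind : iIndepFun X P)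
    (n : ℕ) (hn : 1 ≤ n) :
    (P {ω | ∀ j, 1 ≤ j → j ≤ n → 0 < ∑ i ∈ Finset.range j, X i ω}).toReal =
      ((2 * n).choose n : ℝ) / 2 ^ (2 * n) :=
  SWSP.main P μ hsym hcont X hmeas hdist hind n hn
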